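/- Let p be a prime, q a power of p, and k, t positive integers. Let q' = p^r for a non-negative integer r, set p_i = 1 + q' + q'^2 + … + q'^i for i ≥ 0, and let n = t·p_k. Then the q-linearized polynomial f(x) = x + Σ_{i=0}^{k−1} x^{q^{t p_i}} is a subspace polynomial of L_{n,q}: the set of roots of f in F_{q^n} is an F_q-subspace of F_q-dimension t·p_{k−1}, equal to the q-degree of f; equivalently, f(x) divides x^{q^n} − x. -/

import Mathlib

open Polynomial


/-- `F_q`-dimension of the kernel (set of roots in `K`) of a map `f : K → K`. -/
noncomputable def kdim (Fq : Type) [Field Fq] {K : Type} [Field K] [Algebra Fq K]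
    (f : K → K) : ℕ :=
  Module.finrank Fq ↥(Submodule.span Fq {x : K | f x = 0})

lemma aux_monic {R : Type*} [CommRing R] [Nontrivial R] (m : ℕ) (c : ℕ → R) (e : ℕ → ℕ)
    (hc : c m = 1) (he : ∀ i < m, e i < e m) :
    (∑ i ∈ Finset.range (m+1), C (c i) * X ^ e i).Monic ∧
    (∑ i ∈ Finset.range (m+1), C (c i) * X ^ e i).natDegree = e m := by
  set F := ∑ i ∈ Finset.range (m+1), C (c i) * X ^ e i with hF
  have hco : F.coeff (e m) = 1 := by
    rw [hF, finset_sum_coeff, Finset.sum_range_succ]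
    have h1 : ∀ i ∈ Finset.range m, (C (c i) * X ^ e i).coeff (e m) = 0 := by
      intro i hi
      rw [coeff_C_mul, coeff_X_pow, if_neg (he i (Finset.mem_range.mp hi)).ne', mul_zero]
    rw [Finset.sum_eq_zero h1, zero_add, coeff_C_mul, coeff_X_pow, if_pos rfl, hc, mul_one]
  have hdeg : F.natDegree ≤ e m := by
    apply natDegree_sum_le_of_forall_le
    intro i hi
    refine (natDegree_C_mul_le _ _).trans ?_
    rw [natDegree_X_pow]
    rcases Finset.mem_range_succ_iff.mp hi |>.lt_or_eq with h | h
    · exact (he i h).le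
    · exact h ▸ le_rfl
  have hge : e m ≤ F.natDegree := le_natDegree_of_ne_zero (by rw [hco]; exact one_ne_zero)
  have hnd : F.natDegree = e m := le_antisymm hdeg hge
  refine ⟨?_, hnd⟩
  rw [Monic, leadingCoeff, hnd, hco]

/-- with `q' = p^r`, `p_i = 1 + q' + ⋯ + q'^i` and `n = t·p_k`, the
`q`-polynomial `f(x) = x + Σ_{i=0}^{k−1} x^{q^{t·p_i}}` is a subspace polynomial of
`L_{n,q}`: its roots in `F_{q^n}` form an `F_q`-subspace of dimension `t·p_{k−1}`;
equivalently `f(x) ∣ x^{q^n} − x`. -/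
theorem stmt_6 (p q qp r t k n : ℕ) (Fq K : Type) [Field Fq] [Fintype Fq] [Field K]
    [Fintype K] [Algebra Fq K]
    (hp : p.Prime) (hpe : ∃ e : ℕ, 0 < e ∧ q = p ^ e) (hqp : qp = p ^ r)
    (ht : 0 < t) (hk : 0 < k)
    (hn : n = t * ∑ j ∈ Finset.range (k + 1), qp ^ j)
    (hcard : Fintype.card Fq = q) (hfin : Module.finrank Fq K = n) :
    kdim Fq (fun x : K =>
        x + ∑ i ∈ Finset.range k, x ^ (q ^ (t * ∑ j ∈ Finset.range (i + 1), qp ^ j)))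
      = t * ∑ j ∈ Finset.range k, qp ^ j ∧
    (Polynomial.X + ∑ i ∈ Finset.range k,
        (Polynomial.X : Polynomial K) ^ (q ^ (t * ∑ j ∈ Finset.range (i + 1), qp ^ j)))
      ∣ Polynomial.X ^ (q ^ n) - Polynomial.X := by
  classical
  obtain ⟨e, he0, hqe⟩ := hpe
  have hp2 : 2 ≤ p := hp.two_le
  haveI : Fact p.Prime := ⟨hp⟩
  have hq2 : 2 ≤ q := by
    rw [hqe]
    calc 2 ≤ p := hp2
      _ ≤ p ^ e := Nat.le_self_pow he0.ne' p
  -- characteristic of Fq and K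
  haveI hchFq : CharP Fq p := by
    obtain ⟨m, hcp, hcard'⟩ := FiniteField.card Fq (ringChar Fq)
    have hpc : p = ringChar Fq := by
      have hd : p ∣ ringChar Fq ^ (m : ℕ) := by
        rw [← hcard', hcard, hqe]; exact dvd_pow_self p he0.ne'
      exact (Nat.prime_dvd_prime_iff_eq hp hcp).mp (hp.dvd_of_dvd_pow hd)
    rw [hpc]; exact ringChar.charP Fq
  haveI hchK : CharP K p := charP_of_injective_algebraMap (algebraMap Fq K).injective p
  -- basic quantities
  set Q := q ^ t with hQdef
  have hQp : Q = p ^ (e * t) := by rw [hQdef, hqe, ← pow_mul]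
  have hQ2 : 2 ≤ Q := le_trans hq2 (Nat.le_self_pow ht.ne' q)
  have hqp1 : 1 ≤ qp := by rw [hqp]; exact Nat.one_le_pow _ _ hp.pos
  set E : ℕ → ℕ := fun i => ∑ j ∈ Finset.range i, qp ^ j with hE
  have hE0 : E 0 = 0 := by simp [hE]
  have hEsucc : ∀ i, E (i+1) = qp * E i + 1 := by
    intro i
    simp only [hE, Finset.sum_range_succ']
    simp [pow_succ', Finset.mul_sum]
  have hEmono : StrictMono E := by
    apply strictMono_nat_of_lt_succ
    intro i
    have : E (i+1) = E i + qp ^ i := by simp [hE, Finset.sum_range_succ]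
    rw [this]
    exact Nat.lt_add_of_pos_right (Nat.pow_pos hqp1)
  -- Frobenius power as an Fq-linear endomorphism of K
  have hcFq : ∀ c : Fq, c ^ Q = c := by
    intro c
    have := FiniteField.pow_card_pow (K := Fq) t c
    rwa [hcard] at this
  set ψ : K →ₗ[Fq] K :=
    { toFun := fun x => x ^ Q,
      map_add' := fun x y => by
        simp only [hQp]
        exact add_pow_char_pow x y p (e * t),
      map_smul' := fun c x => by
        simp only [RingHom.id_apply, Algebra.smul_def, mul_pow, ← map_pow, hcFq] } with hψ
  have hψap : ∀ x : K, ψ x = x ^ Q := fun x => rfl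
  have hψpow : ∀ (s : ℕ) (x : K), (ψ ^ s) x = x ^ Q ^ s := by
    intro s
    induction s with
    | zero => intro x; simp
    | succ s ih =>
      intro x
      rw [pow_succ, Module.End.mul_apply, ih, hψap, ← pow_mul, ← pow_succ']
  -- the polynomials over Fq
  set P : Polynomial Fq := ∑ i ∈ Finset.range (k+1), X ^ E i with hP
  set Cq : Polynomial Fq := X * P ^ (qp - 1) - 1 with hCq
  have hPq : P ^ qp = ∑ i ∈ Finset.range (k+1), X ^ (qp * E i) := by
    rw [hP, hqp, sum_pow_char_pow]
    apply Finset.sum_congr rfl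
    intro i _
    rw [← pow_mul, mul_comm (E i)]
  have hfact : P * Cq = X ^ E (k+1) - 1 := by
    have h1 : P * Cq = X * P ^ qp - P := by
      rw [hCq, mul_sub, mul_one, mul_comm P, mul_assoc]
      congr 2
      rw [← pow_succ]
      congr 1
      omega
    have h2 : ∀ i ∈ Finset.range (k+1), X * X ^ (qp * E i) = (X : Polynomial Fq) ^ E (i+1) := by
      intro i _
      rw [hEsucc i, pow_add, pow_one, mul_comm]
    have h3 : (∑ i ∈ Finset.range (k+1), (X : Polynomial Fq) ^ E (i+1))
        - ∑ i ∈ Finset.range (k+1), (X : Polynomial Fq) ^ E i = X ^ E (k+1) - 1 := by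
      rw [← Finset.sum_sub_distrib,
        Finset.sum_range_sub (fun i => (X : Polynomial Fq) ^ E i) (k+1), hE0, pow_zero]
    rw [h1, hPq, Finset.mul_sum, Finset.sum_congr rfl h2, hP]
    exact h3
  -- degrees and monicity
  have hPform : P = ∑ i ∈ Finset.range (k+1), C (1 : Fq) * X ^ E i := by
    simp [hP]
  have hPaux := aux_monic k (fun _ => (1 : Fq)) E rfl (fun i hi => hEmono hi)
  have hPmonic : P.Monic := by rw [hPform]; exact hPaux.1
  have hPdeg : P.natDegree = E k := by rw [hPform]; exact hPaux.2
  have hXPmonic : (X * P ^ (qp - 1)).Monic := monic_X.mul (hPmonic.pow _)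
  have hXPdeg : (X * P ^ (qp - 1)).natDegree = 1 + (qp - 1) * E k := by
    rw [monic_X.natDegree_mul (hPmonic.pow _), natDegree_pow, hPdeg, natDegree_X]
  have hXPpos : 0 < (X * P ^ (qp - 1)).natDegree := by rw [hXPdeg]; omega
  have hCqmonic : Cq.Monic := by
    rw [hCq]
    refine hXPmonic.sub_of_left ?_
    rw [degree_one]
    exact natDegree_pos_iff_degree_pos.mp hXPpos
  have hCqdeg : Cq.natDegree = E (k+1) - E k := by
    have h1 : Cq.natDegree = 1 + (qp - 1) * E k := by
      rw [hCq, ← C_1, natDegree_sub_C, hXPdeg]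
    rw [h1]
    have h2 : (qp - 1) * E k = qp * E k - E k := by rw [Nat.sub_mul, one_mul]
    have h3 : E k ≤ qp * E k := Nat.le_mul_of_pos_left _ hqp1
    have h4 := hEsucc k
    omega
  -- the kernel-dimension bound for monic polynomials
  have gen : ∀ g : Polynomial Fq, g.Monic →
      Module.finrank Fq ↥(LinearMap.ker (Polynomial.aeval ψ g)) ≤ t * g.natDegree := by
    intro g hg
    set d := g.natDegree with hd
    set F : Polynomial K := ∑ i ∈ Finset.range (d+1),
      C (algebraMap Fq K (g.coeff i)) * X ^ Q ^ i with hFdef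
    have hFaux := aux_monic d (fun i => algebraMap Fq K (g.coeff i)) (fun i => Q ^ i)
        (by show (algebraMap Fq K) (g.coeff d) = 1
            rw [hd, hg.coeff_natDegree, map_one])
        (fun i hi => Nat.pow_lt_pow_right hQ2 hi)
    have hFmonic : F.Monic := hFaux.1
    have hFdeg : F.natDegree = Q ^ d := hFaux.2
    have hFne : F ≠ 0 := hFmonic.ne_zero
    have heval : ∀ x : K, F.eval x = (Polynomial.aeval ψ g) x := by
      intro x
      rw [hFdef, Polynomial.eval_finset_sum, Polynomial.aeval_eq_sum_range,
        LinearMap.sum_apply]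
      apply Finset.sum_congr rfl
      intro i _
      rw [Polynomial.eval_mul, Polynomial.eval_C, Polynomial.eval_pow, Polynomial.eval_X,
        LinearMap.smul_apply, hψpow, Algebra.smul_def]
    have hker : ((LinearMap.ker (Polynomial.aeval ψ g) : Submodule Fq K) : Set K)
        ⊆ ↑F.roots.toFinset := by
      intro x hx
      simp only [Finset.coe_sort_coe, Multiset.mem_toFinset, Finset.mem_coe,
        Polynomial.mem_roots hFne, Polynomial.IsRoot.def]
      rw [heval]
      exact LinearMap.mem_ker.mp hx
    have hcard1 : Fintype.card ↥(LinearMap.ker (Polynomial.aeval ψ g)) ≤ Q ^ d := by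
      calc Fintype.card ↥(LinearMap.ker (Polynomial.aeval ψ g))
          = ((LinearMap.ker (Polynomial.aeval ψ g) : Submodule Fq K) : Set K).toFinset.card := by
            rw [Set.toFinset_card]
            exact Fintype.card_congr (Equiv.cast rfl)
        _ ≤ F.roots.toFinset.card := Finset.card_le_card (Set.toFinset_subset.mpr hker)
        _ ≤ Multiset.card F.roots := Multiset.toFinset_card_le _
        _ ≤ F.natDegree := Polynomial.card_roots' F
        _ = Q ^ d := hFdeg
    have hcard2 : Fintype.card ↥(LinearMap.ker (Polynomial.aeval ψ g))
        = q ^ Module.finrank Fq ↥(LinearMap.ker (Polynomial.aeval ψ g)) := by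
      rw [← hcard]; exact Module.card_eq_pow_finrank
    rw [hcard2, hQdef, ← pow_mul] at hcard1
    exact (Nat.pow_le_pow_iff_right hq2).mp hcard1
  -- the statement's map equals `aeval ψ P`
  have hfP : ∀ x : K,
      x + ∑ i ∈ Finset.range k, x ^ q ^ (t * ∑ j ∈ Finset.range (i + 1), qp ^ j)
        = (Polynomial.aeval ψ P) x := by
    intro x
    rw [hP, map_sum, LinearMap.sum_apply, Finset.sum_range_succ']
    have h0 : ((Polynomial.aeval ψ) ((X : Polynomial Fq) ^ E 0)) x = x := by
      rw [map_pow, Polynomial.aeval_X, hψpow, hE0, pow_zero, pow_one]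
    have hsuc : ∀ i, ((Polynomial.aeval ψ) ((X : Polynomial Fq) ^ E (i+1))) x
        = x ^ q ^ (t * ∑ j ∈ Finset.range (i + 1), qp ^ j) := by
      intro i
      rw [map_pow, Polynomial.aeval_X, hψpow, hQdef, ← pow_mul]
    rw [h0, Finset.sum_congr rfl (fun i _ => hsuc i), add_comm]
  -- the roots form exactly the kernel
  have hkerset : {x : K | x + ∑ i ∈ Finset.range k,
        x ^ q ^ (t * ∑ j ∈ Finset.range (i + 1), qp ^ j) = 0}
      = ((LinearMap.ker (Polynomial.aeval ψ P) : Submodule Fq K) : Set K) := by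
    ext x
    simp only [Set.mem_setOf_eq, SetLike.mem_coe, LinearMap.mem_ker, hfP x]
  have hcardK : Fintype.card K = q ^ n := by
    have := Module.card_eq_pow_finrank (K := Fq) (V := K)
    rwa [hfin, hcard] at this
  have hzero : Polynomial.aeval ψ ((X : Polynomial Fq) ^ E (k+1) - 1) = 0 := by
    apply LinearMap.ext
    intro x
    have hEn : t * E (k+1) = n := by rw [hn]
    rw [map_sub, map_pow, Polynomial.aeval_X, map_one, LinearMap.sub_apply,
      Module.End.one_apply, LinearMap.zero_apply, hψpow, hQdef, ← pow_mul, hEn,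
      ← hcardK, FiniteField.pow_card, sub_self]
  have hrange : LinearMap.range (Polynomial.aeval ψ Cq) ≤ LinearMap.ker (Polynomial.aeval ψ P) := by
    rw [LinearMap.range_le_ker_iff, ← Module.End.mul_eq_comp, ← map_mul, hfact, hzero]
  -- the dimension of the kernel
  have hupper : Module.finrank Fq ↥(LinearMap.ker (Polynomial.aeval ψ P)) ≤ t * E k := by
    have := gen P hPmonic
    rwa [hPdeg] at this
  have hlower : t * E k ≤ Module.finrank Fq ↥(LinearMap.ker (Polynomial.aeval ψ P)) := by
    have h1 := gen Cq hCqmonic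
    rw [hCqdeg] at h1
    have h2 := LinearMap.finrank_range_add_finrank_ker (Polynomial.aeval ψ Cq)
    rw [hfin] at h2
    have h3 : Module.finrank Fq ↥(LinearMap.range (Polynomial.aeval ψ Cq))
        ≤ Module.finrank Fq ↥(LinearMap.ker (Polynomial.aeval ψ P)) :=
      Submodule.finrank_mono hrange
    have h4 : t * (E (k+1) - E k) + t * E k = t * E (k+1) := by
      rw [← Nat.mul_add, Nat.sub_add_cancel (hEmono (Nat.lt_succ_self k)).le]
    have h5 : n = t * E (k+1) := hn
    omega
  have hdim : Module.finrank Fq ↥(LinearMap.ker (Polynomial.aeval ψ P)) = t * E k :=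
    le_antisymm hupper hlower
  constructor
  · rw [kdim]
    have : {x : K | x + ∑ i ∈ Finset.range k,
        x ^ q ^ (t * ∑ j ∈ Finset.range (i + 1), qp ^ j) = 0}
        = ((LinearMap.ker (Polynomial.aeval ψ P) : Submodule Fq K) : Set K) := hkerset
    rw [this, Submodule.span_eq]
    exact hdim
  · -- divisibility
    set fpoly : Polynomial K := Polynomial.X + ∑ i ∈ Finset.range k,
      (Polynomial.X : Polynomial K) ^ q ^ (t * ∑ j ∈ Finset.range (i + 1), qp ^ j) with hfpoly
    have hfform : fpoly = ∑ i ∈ Finset.range (k+1), C (1 : K) * X ^ Q ^ E i := by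
      rw [hfpoly, Finset.sum_range_succ']
      simp only [map_one, one_mul]
      have h0 : (X : Polynomial K) ^ Q ^ E 0 = X := by rw [hE0, pow_zero, pow_one]
      have hs : ∀ i, (X : Polynomial K) ^ Q ^ E (i+1)
          = X ^ q ^ (t * ∑ j ∈ Finset.range (i + 1), qp ^ j) := by
        intro i
        rw [hQdef, ← pow_mul]
      rw [h0, Finset.sum_congr rfl (fun i _ => hs i), add_comm]
    have hfaux := aux_monic k (fun _ => (1 : K)) (fun i => Q ^ E i) rfl
      (fun i hi => Nat.pow_lt_pow_right hQ2 (hEmono hi))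
    have hfmonic : fpoly.Monic := by rw [hfform]; exact hfaux.1
    have hfdeg : fpoly.natDegree = Q ^ E k := by rw [hfform]; exact hfaux.2
    have hfne : fpoly ≠ 0 := hfmonic.ne_zero
    have hfeval : ∀ x : K, fpoly.eval x = (Polynomial.aeval ψ P) x := by
      intro x
      rw [hfpoly]
      simp only [Polynomial.eval_add, Polynomial.eval_X, Polynomial.eval_finset_sum,
        Polynomial.eval_pow]
      exact hfP x
    set S : Finset K := ((LinearMap.ker (Polynomial.aeval ψ P) : Submodule Fq K) : Set K).toFinset
      with hS
    have hSmem : ∀ a : K, a ∈ S ↔ (Polynomial.aeval ψ P) a = 0 := by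
      intro a
      rw [hS, Set.mem_toFinset, SetLike.mem_coe, LinearMap.mem_ker]
    have hScard : S.card = Q ^ E k := by
      rw [hS, Set.toFinset_card]
      have h1 : Fintype.card ↥((LinearMap.ker (Polynomial.aeval ψ P) : Submodule Fq K) : Set K)
          = Fintype.card ↥(LinearMap.ker (Polynomial.aeval ψ P)) :=
        Fintype.card_congr (Equiv.cast rfl)
      rw [h1, Module.card_eq_pow_finrank (K := Fq), hcard, hdim, hQdef, pow_mul]
    have hSroots : S.val ≤ fpoly.roots := by
      rw [Multiset.le_iff_subset S.nodup]
      intro a ha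
      rw [Polynomial.mem_roots hfne, Polynomial.IsRoot.def, hfeval]
      exact (hSmem a).mp ha
    have hprodmonic : ((S.val.map fun a => X - C a).prod : Polynomial K).Monic :=
      Polynomial.monic_multiset_prod_of_monic _ _ (fun a _ => Polynomial.monic_X_sub_C a)
    have hproddeg : ((S.val.map fun a => X - C a).prod : Polynomial K).natDegree = S.card := by
      rw [Polynomial.natDegree_multiset_prod_of_monic _ (fun f hf => by
        obtain ⟨a, _, rfl⟩ := Multiset.mem_map.mp hf
        exact Polynomial.monic_X_sub_C a)]
      simp [Multiset.map_map, Function.comp_def]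
    have hprod : fpoly = (S.val.map fun a => X - C a).prod := by
      apply Polynomial.eq_of_monic_of_dvd_of_natDegree_le hprodmonic hfmonic
      · exact dvd_trans (Multiset.prod_dvd_prod_of_le (Multiset.map_le_map hSroots))
          (Polynomial.prod_multiset_X_sub_C_dvd fpoly)
      · rw [hfdeg, hproddeg, hScard]
    have hroots2 : ((X : Polynomial K) ^ q ^ n - X).roots = Finset.univ.val := by
      have := FiniteField.roots_X_pow_card_sub_X K
      rwa [hcardK] at this
    have hSuniv : S.val ≤ ((X : Polynomial K) ^ q ^ n - X).roots := by
      rw [hroots2, Multiset.le_iff_subset S.nodup]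
      intro a _
      exact Finset.mem_univ a
    rw [hprod]
    exact dvd_trans (Multiset.prod_dvd_prod_of_le (Multiset.map_le_map hSuniv))
      (Polynomial.prod_multiset_X_sub_C_dvd _)
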